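/- Let A ∈ M_n(ℂ) be Hermitian positive semidefinite with ‖A‖₂ ≤ 1, and let y ∈ ℂⁿ be a unit vector with A y = y. Let a : ℝ → M_n(ℂ) be continuous Hermitian positive semidefinite and G solve G(0)=Id, G'(t) = -a(t)G(t). If a(t)y = 0 for all t ∈ ℝ, then ‖G(t)‖₂ = 1 for all t ≥ 0. -/

import Mathlib

open Matrix
open scoped Matrix.Norms.L2Operator ComplexOrder

noncomputable section

/-- The continuous `ℝ`-linear map `M ↦ M *ᵥ x` into `EuclideanSpace`. -/
def stmt10_mulVecCLM {n : ℕ} (x : Fin n → ℂ) :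
    Matrix (Fin n) (Fin n) ℂ →L[ℝ] EuclideanSpace ℂ (Fin n) :=
  LinearMap.toContinuousLinearMap
  { toFun := fun M => (WithLp.equiv 2 (Fin n → ℂ)).symm (M *ᵥ x)
    map_add' := fun M N => by
      simp [Matrix.add_mulVec]
    map_smul' := fun r M => by
      simp [Matrix.smul_mulVec] }

@[simp] lemma stmt10_mulVecCLM_apply {n : ℕ} (x : Fin n → ℂ) (M : Matrix (Fin n) (Fin n) ℂ) :
    stmt10_mulVecCLM x M = (WithLp.equiv 2 (Fin n → ℂ)).symm (M *ᵥ x) := rfl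

/-- The continuous `ℝ`-linear map `M ↦ Mᴴ *ᵥ x` into `EuclideanSpace`. -/
def stmt10_ctMulVecCLM {n : ℕ} (x : Fin n → ℂ) :
    Matrix (Fin n) (Fin n) ℂ →L[ℝ] EuclideanSpace ℂ (Fin n) :=
  LinearMap.toContinuousLinearMap
  { toFun := fun M => (WithLp.equiv 2 (Fin n → ℂ)).symm (Mᴴ *ᵥ x)
    map_add' := fun M N => by
      simp [Matrix.conjTranspose_add, Matrix.add_mulVec]
    map_smul' := fun r M => by
      have : (r • M)ᴴ = r • Mᴴ := by
        ext i j
        simp [Matrix.conjTranspose_apply]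
      simp [this, Matrix.smul_mulVec] }

@[simp] lemma stmt10_ctMulVecCLM_apply {n : ℕ} (x : Fin n → ℂ) (M : Matrix (Fin n) (Fin n) ℂ) :
    stmt10_ctMulVecCLM x M = (WithLp.equiv 2 (Fin n → ℂ)).symm (Mᴴ *ᵥ x) := rfl

end

/-- If `A` is Hermitian positive semidefinite with `‖A‖₂ ≤ 1` and `A y = y` for a unit vector
`y`, and the damping `a` (continuous, Hermitian positive semidefinite) kills `y` along the whole
trajectory (`a t y = 0` for all `t`), then the solution of `G 0 = 1`, `G' = -aG` satisfies
`‖G t‖₂ = 1` for all `t ≥ 0`. -/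
theorem stmt_10 {n : ℕ} (A : Matrix (Fin n) (Fin n) ℂ)
    (hA : A.PosSemidef) (hA1 : ‖A‖ ≤ 1)
    (y : Fin n → ℂ) (hy : star y ⬝ᵥ y = 1) (hAy : A *ᵥ y = y)
    (a G : ℝ → Matrix (Fin n) (Fin n) ℂ)
    (ha_cont : Continuous a) (ha_psd : ∀ t, (a t).PosSemidef)
    (hG0 : G 0 = 1) (hG : ∀ t, HasDerivAt G (-(a t) * G t) t)
    (hay : ∀ t : ℝ, a t *ᵥ y = 0) :
    ∀ t, 0 ≤ t → ‖G t‖ = 1 := by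
  classical
  set e := WithLp.equiv 2 (Fin n → ℂ) with he
  -- the unit vector in EuclideanSpace
  have hynorm : ‖e.symm y‖ = 1 := by
    have h1 : (inner ℂ (e.symm y) (e.symm y) : ℂ) = 1 := by
      rw [he, WithLp.equiv_symm_apply, EuclideanSpace.inner_toLp_toLp, dotProduct_comm, hy]
    have h3 : (‖e.symm y‖ : ℝ) ^ 2 = 1 := by
      rw [← inner_self_eq_norm_sq (𝕜 := ℂ), h1]
      simp
    nlinarith [norm_nonneg (e.symm y)]
  -- Step 1: (G s)ᴴ *ᵥ y = y for all s
  have hGy : ∀ s : ℝ, (G s)ᴴ *ᵥ y = y := by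
    have hderiv : ∀ s, HasDerivAt (fun s => stmt10_ctMulVecCLM y (G s)) 0 s := by
      intro s
      have h := (stmt10_ctMulVecCLM (n := n) y).hasFDerivAt.comp_hasDerivAt s (hG s)
      have hherm : (a s)ᴴ = a s := (ha_psd s).1
      have hz : (-(a s) * G s)ᴴ *ᵥ y = 0 := by
        rw [Matrix.conjTranspose_mul, Matrix.conjTranspose_neg, hherm, Matrix.mul_neg,
          Matrix.neg_mulVec, ← Matrix.mulVec_mulVec, hay, Matrix.mulVec_zero, neg_zero]
      rw [show (0 : EuclideanSpace ℂ (Fin n)) = stmt10_ctMulVecCLM y (-(a s) * G s) by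
        rw [stmt10_ctMulVecCLM_apply, hz]; simp]
      exact h
    have hconst : ∀ s, stmt10_ctMulVecCLM y (G s) = stmt10_ctMulVecCLM y (G 0) := by
      intro s
      exact is_const_of_deriv_eq_zero
        (fun u => ((hderiv u).differentiableAt))
        (fun u => (hderiv u).deriv) s 0
    intro s
    have := hconst s
    rw [hG0] at this
    simp only [stmt10_ctMulVecCLM_apply] at this
    have := congrArg e this
    simpa using this
  -- Step 2: lower bound ‖G t‖ ≥ 1
  have hlow : ∀ s : ℝ, 1 ≤ ‖G s‖ := by
    intro s
    have h := Matrix.l2_opNorm_mulVec (G s)ᴴ (e.symm y)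
    rw [show ((G s)ᴴ *ᵥ (e.symm y : EuclideanSpace ℂ (Fin n))) = (G s)ᴴ *ᵥ y from rfl] at h
    rw [hGy s] at h
    rw [Matrix.l2_opNorm_conjTranspose] at h
    have : ‖(EuclideanSpace.equiv (Fin n) ℂ).symm y‖ = 1 := hynorm
    rw [this, hynorm, mul_one] at h
    exact h
  -- Step 3: upper bound ‖G t‖ ≤ 1 for t ≥ 0
  have hup : ∀ t : ℝ, 0 ≤ t → ‖G t‖ ≤ 1 := by
    intro t ht
    rw [Matrix.l2_opNorm_def]
    refine ContinuousLinearMap.opNorm_le_bound _ zero_le_one ?_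
    intro v
    rw [one_mul]
    -- u s = G s *ᵥ x in EuclideanSpace, where x = e v
    set x : Fin n → ℂ := e v with hx
    set u : ℝ → EuclideanSpace ℂ (Fin n) := fun s => stmt10_mulVecCLM x (G s) with hu
    have hud : ∀ s, HasDerivAt u (stmt10_mulVecCLM x (-(a s) * G s)) s := fun s =>
      (stmt10_mulVecCLM (n := n) x).hasFDerivAt.comp_hasDerivAt s (hG s)
    set φ : ℝ → ℝ := fun s => Complex.re (inner ℂ (u s) (u s) : ℂ) with hφ
    have hφd : ∀ s, HasDerivAt φ
        (Complex.re ((inner ℂ (u s) (stmt10_mulVecCLM x (-(a s) * G s)) : ℂ)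
          + inner ℂ (stmt10_mulVecCLM x (-(a s) * G s)) (u s))) s := by
      intro s
      exact (Complex.reCLM.hasFDerivAt.comp_hasDerivAt s
        ((hud s).inner ℂ (hud s)))
    have hφ' : ∀ s, deriv φ s ≤ 0 := by
      intro s
      rw [(hφd s).deriv]
      have hw : (stmt10_mulVecCLM x (-(a s) * G s) : EuclideanSpace ℂ (Fin n))
          = e.symm (-(a s *ᵥ (G s *ᵥ x))) := by
        simp only [stmt10_mulVecCLM_apply, ← Matrix.mulVec_mulVec, Matrix.neg_mulVec, he]
      have hus : (u s : EuclideanSpace ℂ (Fin n)) = e.symm (G s *ᵥ x) := rfl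
      rw [hw, hus]
      set w : Fin n → ℂ := G s *ᵥ x with hwdef
      have h1 : (inner ℂ (e.symm w) (e.symm (-(a s *ᵥ w))) : ℂ) = -(star w ⬝ᵥ (a s *ᵥ w)) := by
        rw [he, EuclideanSpace.inner_toLp_toLp, dotProduct_comm]
        simp
      have h2 : (inner ℂ (e.symm (-(a s *ᵥ w))) (e.symm w) : ℂ)
          = -(star (a s *ᵥ w) ⬝ᵥ w) := by
        rw [he, EuclideanSpace.inner_toLp_toLp, dotProduct_comm]
        simp
      rw [h1, h2]
      have hpos : (0 : ℂ) ≤ star w ⬝ᵥ (a s *ᵥ w) := (ha_psd s).dotProduct_mulVec_nonneg w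
      have hre : 0 ≤ (star w ⬝ᵥ (a s *ᵥ w)).re := by
        have := (Complex.le_def.mp hpos).1
        simpa using this
      -- the conjugate term has the same real part
      have hconj : (star (a s *ᵥ w) ⬝ᵥ w) = star (star w ⬝ᵥ (a s *ᵥ w)) := by
        rw [← Matrix.star_dotProduct_star, star_star]
      rw [hconj]
      simp only [Complex.add_re, Complex.neg_re]
      rw [Complex.star_def, Complex.conj_re]
      linarith
    have hanti : AntitoneOn φ (Set.Ici (0 : ℝ)) := by
      apply antitoneOn_of_deriv_nonpos (convex_Ici 0)
      · exact (fun s _ => ((hφd s).differentiableAt).continuousAt.continuousWithinAt)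
      · exact fun s _ => ((hφd s).differentiableAt).differentiableWithinAt
      · exact fun s _ => hφ' s
    have hle : φ t ≤ φ 0 := hanti (Set.self_mem_Ici) ht ht
    have hφval : ∀ s, φ s = ‖u s‖ ^ 2 := fun s => inner_self_eq_norm_sq (𝕜 := ℂ) (u s)
    have hu0 : u 0 = e.symm x := by
      rw [hu]
      simp only [hG0, stmt10_mulVecCLM_apply, Matrix.one_mulVec, he]
    have hux : ‖u 0‖ = ‖v‖ := by
      rw [hu0, hx]
      rfl
    have h2 : ‖u t‖ ^ 2 ≤ ‖v‖ ^ 2 := by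
      rw [← hφval t]
      calc φ t ≤ φ 0 := hle
        _ = ‖v‖ ^ 2 := by rw [hφval 0, hux]
    have h3 : ‖u t‖ ≤ ‖v‖ := by
      nlinarith [norm_nonneg (u t), norm_nonneg v]
    -- the CLM application is definitionally `u t`
    exact h3
  intro t ht
  exact le_antisymm (hup t ht) (hlow t)
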